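/- For every c₃ < 1/ln 2 and every c₄ > 2 there exists δ > 0 with the following property: for every n ≥ 1 and every subset A ⊆ C_n with |A| ≥ 2 and (ln|A|)/n ≤ δ, there exists p with 0 < p ≤ 1 such that, setting ρ = p/2 − Δ(A,p)/n, one has c₃·ρ²·ln(1/ρ) ≤ (ln|A|)/n ≤ c₄·ρ·ln(1/ρ). -/

import Mathlib

/-- The randomized Hamming distance `d_l(x,y) = Σ_{i : x i ≠ y i} l i`, where the coordinates
with `l i = 1` are the ones that are counted. -/
def dl {ι : Type*} [Fintype ι] (l x y : ι → Bool) : ℕ :=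
  (Finset.univ.filter fun i => x i ≠ y i ∧ l i = true).card

/-- The randomized Hamming distance from a point `x` to a subset `A`:
`d_l(x,A) = min_{y ∈ A} d_l(x,y)`. -/
noncomputable def dlToSet {ι : Type*} [Fintype ι] (l x : ι → Bool) (A : Set (ι → Bool)) : ℕ :=
  sInf ((fun y => dl l x y) '' A)

/-- The probability `p^{|l|}(1-p)^{n-|l|}` of the vector `l` of `n` independent
Bernoulli(p) coordinates. -/
noncomputable def bernWeight {ι : Type*} [Fintype ι] (p : ℝ) (l : ι → Bool) : ℝ :=
  p ^ (Finset.univ.filter fun i => l i = true).card *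
    (1 - p) ^ (Finset.univ.filter fun i => l i = false).card

/-- `Δ(A,p)`: the expectation of `d_l(x,A)` when `x` is uniform on the cube and `l` has
independent Bernoulli(p) coordinates. -/
noncomputable def avgDistP {ι : Type*} [Fintype ι] [DecidableEq ι] (p : ℝ)
    (A : Set (ι → Bool)) : ℝ :=
  ∑ l : ι → Bool, ∑ x : ι → Bool,
    (bernWeight p l / 2 ^ Fintype.card ι) * (dlToSet l x A : ℝ)

open Finset Real

lemma avgDistP_nonneg {n : ℕ} (A : Set (Fin n → Bool)) {p : ℝ} (h0 : 0 ≤ p) (h1 : p ≤ 1) :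
    0 ≤ avgDistP p A := by
  unfold avgDistP
  refine Finset.sum_nonneg fun l _ => Finset.sum_nonneg fun x _ => ?_
  have hb : 0 ≤ bernWeight p l := by
    unfold bernWeight
    have h1p : (0:ℝ) ≤ 1 - p := by linarith
    positivity
  exact mul_nonneg (div_nonneg hb (by positivity)) (Nat.cast_nonneg _)

lemma continuous_avgDistP {n : ℕ} (A : Set (Fin n → Bool)) :
    Continuous fun p => avgDistP p A := by
  unfold avgDistP bernWeight
  refine continuous_finset_sum _ fun l _ => continuous_finset_sum _ fun x _ => ?_
  fun_prop

lemma avgDistP_one {n : ℕ} (A : Set (Fin n → Bool)) :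
    avgDistP 1 A = (∑ x : Fin n → Bool, (dlToSet (fun _ => true) x A : ℝ)) / 2 ^ n := by
  unfold avgDistP
  rw [Finset.sum_eq_single_of_mem (fun _ => true) (Finset.mem_univ _)]
  · have hb : bernWeight (1:ℝ) (fun _ : Fin n => true) = 1 := by
      unfold bernWeight
      simp
    rw [hb]
    rw [Finset.sum_div]
    refine Finset.sum_congr rfl fun x _ => ?_
    rw [Fintype.card_fin]
    ring
  · intro l _ hl
    have : bernWeight (1:ℝ) l = 0 := by
      unfold bernWeight
      have : ∃ i, l i = false := by
        by_contra h
        push_neg at h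
        exact hl (funext fun i => by simpa using h i)
      obtain ⟨i, hi⟩ := this
      have hpos : 0 < (Finset.univ.filter fun j => l j = false).card :=
        Finset.card_pos.2 ⟨i, by simp [hi]⟩
      rw [sub_self, zero_pow hpos.ne', mul_zero]
    simp [this]

lemma shatter_sum_bound (hn : 1 ≤ n) (A : Set (Fin n → Bool)) (R : Finset (Fin n))
    (hsel : ∀ b : Fin n → Bool, ∃ y, y ∈ A ∧ ∀ i ∈ R, y i = b i) :
    ∑ x : Fin n → Bool, dlToSet (fun _ => true) x A ≤ (n - R.card) * 2 ^ (n - 1) := by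
  classical
  choose g hgA hgR using hsel
  set h : (Fin n → Bool) → (Fin n → Bool) :=
    fun x => g (fun i => if i ∈ R then x i else false) with hh
  have hhA : ∀ x, h x ∈ A := fun x => hgA _
  have hhR : ∀ x, ∀ i ∈ R, h x i = x i := by
    intro x i hi
    have h2 := hgR (fun i => if i ∈ R then x i else false) i hi
    simp only [if_pos hi] at h2
    exact h2
  have hkey : ∀ (x : Fin n → Bool) (j : Fin n), j ∉ R → ∀ v,
      h (Function.update x j v) = h x := by
    intro x j hj v
    apply congrArg g
    funext i
    by_cases hi : i ∈ R
    · have hij : i ≠ j := fun e => hj (e ▸ hi)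
      rw [if_pos hi, if_pos hi, Function.update_of_ne hij]
    · rw [if_neg hi, if_neg hi]
  have hpt : ∀ x : Fin n → Bool,
      dlToSet (fun _ => true) x A ≤ (univ.filter fun i => x i ≠ h x i ∧ i ∉ R).card := by
    intro x
    have h1 : dlToSet (fun _ => true) x A ≤ dl (fun _ => true) x (h x) :=
      Nat.sInf_le ⟨h x, hhA x, rfl⟩
    refine h1.trans (Finset.card_le_card ?_)
    intro i hi
    simp only [dl, Finset.mem_filter, Finset.mem_univ, true_and] at hi ⊢
    refine ⟨hi.1, fun hiR => hi.1 ?_⟩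
    exact (hhR x i hiR).symm
  calc ∑ x : Fin n → Bool, dlToSet (fun _ => true) x A
      ≤ ∑ x : Fin n → Bool, (univ.filter fun i => x i ≠ h x i ∧ i ∉ R).card :=
        Finset.sum_le_sum fun x _ => hpt x
    _ = ∑ x : Fin n → Bool, ∑ i : Fin n, if x i ≠ h x i ∧ i ∉ R then 1 else 0 :=
        Finset.sum_congr rfl fun x _ => Finset.card_filter _ _
    _ = ∑ i : Fin n, ∑ x : Fin n → Bool, if x i ≠ h x i ∧ i ∉ R then 1 else 0 :=
        Finset.sum_comm
    _ = ∑ i : Fin n, if i ∉ R then (univ.filter fun x : Fin n → Bool => x i ≠ h x i).card else 0 := by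
        refine Finset.sum_congr rfl fun i _ => ?_
        by_cases hiR : i ∈ R
        · simp [hiR]
        · rw [if_pos hiR, Finset.card_filter]
          exact Finset.sum_congr rfl fun x _ => by simp [hiR]
    _ ≤ ∑ i : Fin n, if i ∉ R then 2 ^ (n - 1) else 0 := by
        refine Finset.sum_le_sum fun i _ => ?_
        by_cases hiR : i ∈ R
        · simp [hiR]
        · rw [if_pos hiR, if_pos hiR]
          set S := univ.filter fun x : Fin n → Bool => x i ≠ h x i with hS
          set T := univ.filter fun x : Fin n → Bool => ¬ (x i ≠ h x i) with hT
          have hST : S.card + T.card = 2 ^ n := by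
            rw [hS, hT, Finset.card_filter_add_card_filter_not, Finset.card_univ]
            simp [Fintype.card_fun]
          have hcardeq : S.card = T.card := by
            refine Finset.card_bij' (fun x _ => Function.update x i (!x i))
              (fun x _ => Function.update x i (!x i)) ?_ ?_ ?_ ?_
            · intro x hx
              simp only [hS, Finset.mem_filter, Finset.mem_univ, true_and] at hx
              simp only [hT, Finset.mem_filter, Finset.mem_univ, true_and]
              rw [hkey x i hiR]
              simp only [Function.update_self]
              cases hxi : x i <;> cases hhi : h x i <;> simp_all
            · intro x hx
              simp only [hT, Finset.mem_filter, Finset.mem_univ, true_and] at hx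
              simp only [hS, Finset.mem_filter, Finset.mem_univ, true_and]
              rw [hkey x i hiR]
              simp only [Function.update_self]
              cases hxi : x i <;> cases hhi : h x i <;> simp_all
            · intro x _
              funext j
              by_cases hj : j = i
              · subst hj; simp
              · simp [Function.update_of_ne hj]
            · intro x _
              funext j
              by_cases hj : j = i
              · subst hj; simp
              · simp [Function.update_of_ne hj]
          have hpow : 2 ^ n = 2 * 2 ^ (n - 1) := by
            rw [← pow_succ']
            congr 1
            omega
          omega
    _ = (n - R.card) * 2 ^ (n - 1) := by
        rw [Finset.sum_ite, Finset.sum_const, Finset.sum_const, smul_eq_mul, smul_eq_mul,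
          mul_zero, add_zero]
        congr 1
        have : univ.filter (fun i => i ∉ R) = Rᶜ := by
          ext i; simp
        rw [this, Finset.card_compl, Fintype.card_fin]

lemma exists_shattered {n : ℕ} (A : Set (Fin n → Bool)) (d : ℕ)
    (hd : ∑ i ∈ Finset.range d, n.choose i < Nat.card A) :
    ∃ R : Finset (Fin n), R.card = d ∧
      ∀ b : Fin n → Bool, ∃ y, y ∈ A ∧ ∀ i ∈ R, y i = b i := by
  classical
  set F := A.toFinite.toFinset with hF
  have hFcard : F.card = Nat.card A := by
    rw [hF, Set.Finite.card_toFinset, ← Nat.card_eq_fintype_card]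
  set 𝒜 := F.image (fun y => Finset.univ.filter fun i => y i = true) with h𝒜
  have hinj : Set.InjOn (fun y : Fin n → Bool => Finset.univ.filter fun i => y i = true) F := by
    intro y _ y' _ hyy'
    funext i
    have := Finset.ext_iff.1 hyy' i
    simp only [Finset.mem_filter, Finset.mem_univ, true_and] at this
    cases hy : y i <;> cases hy' : y' i <;> simp_all
  have h𝒜card : 𝒜.card = Nat.card A := by
    rw [h𝒜, Finset.card_image_of_injOn hinj, hFcard]
  have hvc : d ≤ 𝒜.vcDim := by
    by_contra hlt
    push_neg at hlt
    have h1 : Nat.card A ≤ 𝒜.shatterer.card := h𝒜card ▸ Finset.card_le_card_shatterer 𝒜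
    have h2 := Finset.card_shatterer_le_sum_vcDim (𝒜 := 𝒜)
    simp only [Fintype.card_fin] at h2
    have h3 : ∑ k ∈ Finset.Iic 𝒜.vcDim, n.choose k
        ≤ ∑ i ∈ Finset.range d, n.choose i := by
      refine Finset.sum_le_sum_of_subset ?_
      intro k hk
      simp only [Finset.mem_Iic] at hk
      simp only [Finset.mem_range]
      omega
    omega
  have hne : 𝒜.shatterer.Nonempty := by
    rw [← Finset.card_pos]
    have h1 : Nat.card A ≤ 𝒜.shatterer.card := h𝒜card ▸ Finset.card_le_card_shatterer 𝒜
    omega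
  obtain ⟨s, hs, hsup⟩ := Finset.exists_mem_eq_sup _ hne Finset.card
  have hscard : d ≤ s.card := by
    have : 𝒜.vcDim = s.card := hsup
    omega
  obtain ⟨R, hRs, hRcard⟩ := Finset.exists_subset_card_eq hscard
  have hShR : 𝒜.Shatters R := (Finset.mem_shatterer.1 hs).mono_right hRs
  refine ⟨R, hRcard, fun b => ?_⟩
  obtain ⟨u, hu, hRu⟩ := hShR (Finset.filter_subset (fun i => b i = true) R)
  obtain ⟨y, hyF, rfl⟩ := Finset.mem_image.1 hu
  refine ⟨y, (A.toFinite.mem_toFinset).1 hyF, fun i hi => ?_⟩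
  have hiff := Finset.ext_iff.1 hRu i
  simp only [Finset.mem_inter, Finset.mem_filter, Finset.mem_univ, true_and] at hiff
  cases hb : b i <;> cases hy : y i <;> simp_all

lemma sum_choose_le {n k : ℕ} (hk : 1 ≤ k) (hkn : k ≤ n) :
    (∑ i ∈ Finset.range (k+1), (n.choose i : ℝ)) ≤ Real.exp (k + k * Real.log (n / k)) := by
  have hk0 : 0 < (k:ℝ) := by exact_mod_cast hk
  have hn0 : 0 < (n:ℝ) := lt_of_lt_of_le hk0 (by exact_mod_cast hkn)
  set x : ℝ := (k:ℝ) / n with hxdef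
  have hx0 : 0 < x := by positivity
  have hx1 : x ≤ 1 := div_le_one_of_le₀ (by exact_mod_cast hkn) hn0.le
  have key : (∑ i ∈ Finset.range (k+1), (n.choose i : ℝ)) * x ^ k ≤ (x + 1) ^ n := by
    calc (∑ i ∈ Finset.range (k+1), (n.choose i : ℝ)) * x ^ k
        = ∑ i ∈ Finset.range (k+1), (n.choose i : ℝ) * x ^ k := by
          rw [Finset.sum_mul]
      _ ≤ ∑ i ∈ Finset.range (k+1), (n.choose i : ℝ) * x ^ i := by
          refine Finset.sum_le_sum fun i hi => ?_
          refine mul_le_mul_of_nonneg_left ?_ (Nat.cast_nonneg _)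
          exact pow_le_pow_of_le_one hx0.le hx1 (Nat.lt_succ_iff.1 (Finset.mem_range.1 hi))
      _ ≤ ∑ i ∈ Finset.range (n+1), (n.choose i : ℝ) * x ^ i := by
          refine Finset.sum_le_sum_of_subset_of_nonneg
            (Finset.range_subset_range.2 (by omega)) fun i _ _ => by positivity
      _ = (x + 1) ^ n := by
          rw [add_pow]
          refine Finset.sum_congr rfl fun i _ => ?_
          rw [one_pow]
          ring
  have hpow : (x + 1) ^ n ≤ Real.exp (k:ℝ) := by
    have h1 : x + 1 ≤ Real.exp x := Real.add_one_le_exp x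
    have h2 : (x + 1) ^ n ≤ (Real.exp x) ^ n :=
      pow_le_pow_left₀ (by positivity) h1 n
    rwa [← Real.exp_nat_mul, mul_comm, hxdef, div_mul_cancel₀ _ hn0.ne'] at h2
  have hxk : x ^ k > 0 := by positivity
  have hfin : (∑ i ∈ Finset.range (k+1), (n.choose i : ℝ)) ≤ Real.exp (k:ℝ) / x ^ k := by
    rw [le_div_iff₀ hxk]
    exact key.trans hpow
  refine hfin.trans ?_
  rw [Real.exp_add]
  have hxinv : ((n:ℝ) / k) = x⁻¹ := by
    rw [hxdef, inv_div]
  rw [hxinv]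
  have hlx : Real.exp ((k:ℝ) * Real.log x⁻¹) = (x⁻¹) ^ k := by
    rw [← Real.log_pow, Real.exp_log (by positivity)]
  rw [hlx, div_eq_mul_inv, inv_pow]

lemma negMulLog_le_two_sqrt {t : ℝ} (ht : 0 < t) : Real.negMulLog t ≤ 2 * Real.sqrt t := by
  have hs : 0 < Real.sqrt t := Real.sqrt_pos.2 ht
  have h1 : Real.log (1 / Real.sqrt t) ≤ 1 / Real.sqrt t - 1 :=
    Real.log_le_sub_one_of_pos (by positivity)
  have h2 : -Real.log t = 2 * Real.log (1 / Real.sqrt t) := by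
    rw [Real.log_div one_ne_zero hs.ne', Real.log_one, Real.log_sqrt ht.le]
    ring
  have h3 : -Real.log t ≤ 2 / Real.sqrt t := by
    rw [h2]
    have h4 : 2 * (1 / Real.sqrt t) = 2 / Real.sqrt t := by ring
    linarith
  calc Real.negMulLog t = t * (-Real.log t) := by rw [Real.negMulLog]; ring
    _ ≤ t * (2 / Real.sqrt t) := by
        exact mul_le_mul_of_nonneg_left h3 ht.le
    _ = 2 * Real.sqrt t := by
        rw [mul_div_assoc', mul_comm, mul_div_assoc, Real.div_sqrt]

lemma strictMonoOn_negMulLog' : StrictMonoOn Real.negMulLog (Set.Icc 0 (Real.exp (-1))) := by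
  refine strictMonoOn_of_deriv_pos (convex_Icc _ _) Real.continuous_negMulLog.continuousOn ?_
  intro x hx
  rw [interior_Icc, Set.mem_Ioo] at hx
  rw [Real.deriv_negMulLog hx.1.ne']
  have : Real.log x < -1 := by
    have := Real.log_lt_log hx.1 hx.2
    rwa [Real.log_exp] at this
  linarith

lemma strictMonoOn_psi : StrictMonoOn (fun v => v + Real.negMulLog v) (Set.Icc (0:ℝ) 1) := by
  refine strictMonoOn_of_deriv_pos (convex_Icc _ _)
    (Continuous.continuousOn (by fun_prop)) ?_
  intro x hx
  rw [interior_Icc, Set.mem_Ioo] at hx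
  have hd : deriv (fun v => v + Real.negMulLog v) x = 1 + (-Real.log x - 1) :=
    ((hasDerivAt_id x).add (Real.hasDerivAt_negMulLog hx.1.ne')).deriv
  rw [hd]
  have : Real.log x < 0 := Real.log_neg hx.1 hx.2
  linarith

lemma key_numeric (g lg W : ℝ) (hg0 : 0 < g) (hg1 : g < 1) (hlg : 0 ≤ lg) (hW1 : 1 ≤ W)
    (hBW : g*(3+lg)/(1-g) ≤ Real.sqrt W) :
    g * ((1 + lg) + W + Real.log W) ≤ W := by
  have hg1' : 0 < 1 - g := by linarith
  have hW0 : 0 < W := by linarith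
  have hsW : Real.sqrt W * Real.sqrt W = W := Real.mul_self_sqrt hW0.le
  have hsW0 : 0 ≤ Real.sqrt W := Real.sqrt_nonneg W
  have hsW1 : 1 ≤ Real.sqrt W := by
    rw [show (1:ℝ) = Real.sqrt 1 by rw [Real.sqrt_one]]
    exact Real.sqrt_le_sqrt hW1
  have hlogW : Real.log W ≤ 2 * Real.sqrt W - 2 := by
    have h1 : Real.log (Real.sqrt W) ≤ Real.sqrt W - 1 :=
      Real.log_le_sub_one_of_pos (Real.sqrt_pos.2 hW0)
    have h2 : Real.log W = 2 * Real.log (Real.sqrt W) := by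
      rw [Real.log_sqrt hW0.le]; ring
    linarith
  have e3 : g * (3 + lg) ≤ (1-g) * Real.sqrt W := by
    rw [div_le_iff₀ hg1'] at hBW
    linarith
  have hc1 : 0 ≤ g * (1 + lg) := mul_nonneg hg0.le (by linarith)
  have e1 : g * (1 + lg) ≤ g * (1 + lg) * Real.sqrt W := by
    nlinarith [mul_nonneg hc1 (sub_nonneg.2 hsW1)]
  have e2 : g * Real.log W ≤ g * (2 * Real.sqrt W) := by
    nlinarith [mul_le_mul_of_nonneg_left hlogW hg0.le]
  have e4 : g * (3 + lg) * Real.sqrt W ≤ (1-g) * W := by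
    nlinarith [mul_le_mul_of_nonneg_right e3 hsW0]
  nlinarith [e1, e2, e4]


set_option maxHeartbeats 2000000

/-- Corollary 4.6: for every `c₃ < 1/ln 2` and `c₄ > 2` there exists `δ > 0` such that for
every `n ≥ 1` and every `A ⊆ C_n` with `|A| ≥ 2` and `(ln |A|)/n ≤ δ`, there is `0 < p ≤ 1`
such that, with `ρ = p/2 - Δ(A,p)/n`, one has
`c₃·ρ²·ln(1/ρ) ≤ (ln |A|)/n ≤ c₄·ρ·ln(1/ρ)`. -/
theorem stmt9 (c₃ c₄ : ℝ) (h₃ : c₃ < 1 / Real.log 2) (h₄ : 2 < c₄) :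
    ∃ δ : ℝ, 0 < δ ∧
      ∀ n : ℕ, 1 ≤ n → ∀ A : Set (Fin n → Bool), 2 ≤ Nat.card A →
        Real.log (Nat.card A) / n ≤ δ →
        ∃ p : ℝ, 0 < p ∧ p ≤ 1 ∧
          ∀ ρ : ℝ, ρ = p / 2 - avgDistP p A / n →
            c₃ * ρ ^ 2 * Real.log (1 / ρ) ≤ Real.log (Nat.card A) / n ∧
              Real.log (Nat.card A) / n ≤ c₄ * ρ * Real.log (1 / ρ) := by
  classical
  have hc₄0 : (0:ℝ) < c₄ := by linarith
  set γ : ℝ := 1/2 + 1/c₄ with hγdef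
  set θ : ℝ := 2/(c₄*γ) with hθdef
  have hγ0 : 0 < γ := by
    rw [hγdef]
    have := one_div_pos.2 hc₄0
    linarith
  have hc₄γ : c₄ * γ = c₄/2 + 1 := by
    rw [hγdef]
    field_simp
  have hγ1 : γ < 1 := by
    rw [hγdef]
    have : 1/c₄ < 1/2 := by
      rw [div_lt_div_iff₀ hc₄0 (by norm_num)]; linarith
    linarith
  have hγ1' : 0 < 1 - γ := by linarith
  have hθ0 : 0 < θ := by
    rw [hθdef]
    exact div_pos two_pos (mul_pos hc₄0 hγ0)
  have hθ1 : θ < 1 := by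
    rw [hθdef, div_lt_one (by rw [hc₄γ]; linarith)]
    rw [hc₄γ]; linarith
  have hθ1' : 0 < 1 - θ := by linarith
  have hγθ : γ * θ = 2 / c₄ := by
    rw [hθdef]
    field_simp
  have hlogγinv : 0 ≤ Real.log γ⁻¹ :=
    Real.log_nonneg ((one_le_inv₀ hγ0).2 hγ1.le)
  set B : ℝ := γ*(3 + Real.log γ⁻¹)/(1-γ) with hBdef
  have hB0 : 0 ≤ B := by
    rw [hBdef]
    exact div_nonneg (mul_nonneg hγ0.le (by linarith)) hγ1'.le
  set M : ℝ := max (max 1 (1/(1-θ))) (B^2) with hMdef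
  have hM1 : 1 ≤ M := le_trans (le_max_left _ _) (le_max_left _ _)
  have hMθ : 1/(1-θ) ≤ M := le_trans (le_max_right _ _) (le_max_left _ _)
  have hMB : B^2 ≤ M := le_max_right _ _
  clear_value γ θ B M
  clear hγdef hθdef hMdef
  refine ⟨Real.exp (-M), Real.exp_pos _, fun n hn A hmA hLδ => ?_⟩
  set m : ℕ := Nat.card A with hmdef
  set L : ℝ := Real.log m / n with hLdef
  have hnpos : (0:ℝ) < n := by exact_mod_cast hn
  have hm2 : (2:ℝ) ≤ (m:ℝ) := by exact_mod_cast hmA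
  have hm0 : (0:ℝ) < (m:ℝ) := by linarith
  have hlog2pos : (0:ℝ) < Real.log 2 := Real.log_pos (by norm_num)
  have hlog2half : (1:ℝ)/2 ≤ Real.log 2 := by
    have h := Real.log_le_sub_one_of_pos (show (0:ℝ) < 1/2 by norm_num)
    rw [Real.log_div one_ne_zero two_ne_zero, Real.log_one] at h
    linarith
  have hlogm2 : Real.log 2 ≤ Real.log m := Real.log_le_log (by norm_num) hm2
  have hlogmpos : 0 < Real.log m := lt_of_lt_of_le hlog2pos hlogm2
  have hL0 : 0 < L := by
    rw [hLdef]
    exact div_pos hlogmpos hnpos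
  have hLn : L * n = Real.log m := by
    rw [hLdef, div_mul_cancel₀ _ hnpos.ne']
  have hexpM1 : Real.exp (-M) ≤ Real.exp (-1) := Real.exp_le_exp.2 (by linarith)
  have hexp1lt : Real.exp (-1) < 1 := by
    calc Real.exp (-1) < Real.exp 0 := Real.exp_lt_exp.2 (by norm_num)
      _ = 1 := Real.exp_zero
  have hL1 : L < 1 := lt_of_le_of_lt (hLδ.trans hexpM1) hexp1lt
  set W : ℝ := -Real.log L with hWdef
  have hWM : M ≤ W := by
    have h1 : Real.log L ≤ -M := by
      have := Real.log_le_log hL0 hLδ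
      rwa [Real.log_exp] at this
    rw [hWdef]; linarith
  have hW1 : 1 ≤ W := le_trans hM1 hWM
  have hW0 : 0 < W := lt_of_lt_of_le one_pos hW1
  have hlogL : Real.log L = -W := by rw [hWdef]; ring
  have hLnlog2 : Real.log 2 ≤ L * n := by rw [hLn]; exact hlogm2
  set z : ℝ := γ * L * n / W with hzdef
  have hz0 : 0 < z := by
    rw [hzdef]
    exact div_pos (mul_pos (mul_pos hγ0 hL0) hnpos) hW0
  set d : ℕ := ⌈z⌉₊ with hddef
  have hd1 : 1 ≤ d := Nat.ceil_pos.2 hz0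
  have hdz : z ≤ (d:ℝ) := Nat.le_ceil z
  have hdz1 : (d:ℝ) < z + 1 := Nat.ceil_lt_add_one hz0.le
  have hd0R : (0:ℝ) < d := by exact_mod_cast hd1
  have hzW : γ * L * n = z * W := by
    rw [hzdef, div_mul_cancel₀ _ hW0.ne']
  clear_value m L W z d
  clear hddef hzdef hWdef
  have hγLW1 : γ * L / W < 1 := by
    have h1 : γ * L ≤ L := by
      nlinarith only [mul_nonneg hγ1'.le hL0.le]
    have h2 : γ * L / W ≤ γ * L := by
      rw [div_le_iff₀ hW0]
      calc γ * L = γ * L * 1 := (mul_one _).symm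
        _ ≤ γ * L * W := by
            exact mul_le_mul_of_nonneg_left hW1 (mul_pos hγ0 hL0).le
    linarith
  -- the key counting inequality
  have hSig : ∑ i ∈ Finset.range d, n.choose i < m := by
    rcases eq_or_lt_of_le hd1 with hd1' | hd2
    · rw [← hd1']
      simp only [Finset.range_one, Finset.sum_singleton, Nat.choose_zero_right]
      omega
    · set k : ℕ := d - 1 with hkdef
      have hk1 : 1 ≤ k := by omega
      have hkd : d = k + 1 := by omega
      have hkz : (k:ℝ) < z := by
        have hcast : (k:ℝ) = (d:ℝ) - 1 := by
          rw [hkdef]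
          push_cast [Nat.cast_sub (by omega : 1 ≤ d)]
          ring
        linarith
      have hzn : z < n := by
        have hγLW : γ * L < W := (div_lt_one hW0).1 hγLW1
        have h1 : z * W < (n:ℝ) * W := by
          rw [← hzW]
          calc γ * L * n = n * (γ * L) := by ring
            _ < n * W := by exact mul_lt_mul_of_pos_left hγLW hnpos
            _ = (n:ℝ) * W := rfl
        exact lt_of_mul_lt_mul_right h1 hW0.le
      have hkn : k ≤ n := by
        have : (k:ℝ) < (n:ℝ) := lt_trans hkz hzn
        exact_mod_cast this.le
      have hsum := sum_choose_le hk1 hkn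
      have hk0 : (0:ℝ) < k := by exact_mod_cast hk1
      set v : ℝ := (k:ℝ)/n with hvdef
      have hv0 : 0 < v := div_pos hk0 hnpos
      set vb : ℝ := γ * L / W with hvbdef
      have hvb0 : 0 < vb := div_pos (mul_pos hγ0 hL0) hW0
      have hvvb : v < vb := by
        rw [hvdef, hvbdef, div_lt_div_iff₀ hnpos hW0]
        calc (k:ℝ) * W < z * W := by exact mul_lt_mul_of_pos_right hkz hW0
          _ = γ * L * n := hzW.symm
          _ = γ * L * n := rfl
      have hvb1 : vb < 1 := hγLW1
      have hv1 : v < 1 := lt_trans hvvb hvb1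
      have hexpid : (k:ℝ) + k * Real.log ((n:ℝ)/k) = n * (v + Real.negMulLog v) := by
        rw [Real.negMulLog, hvdef, Real.log_div hnpos.ne' hk0.ne',
          Real.log_div hk0.ne' hnpos.ne']
        field_simp
        ring
      have hψ : v + Real.negMulLog v < vb + Real.negMulLog vb :=
        strictMonoOn_psi ⟨hv0.le, hv1.le⟩ ⟨hvb0.le, hvb1.le⟩ hvvb
      have hψvb : vb + Real.negMulLog vb ≤ L := by
        have hlogvb : Real.log vb = Real.log γ + Real.log L - Real.log W := by
          rw [hvbdef, Real.log_div (mul_pos hγ0 hL0).ne' hW0.ne',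
            Real.log_mul hγ0.ne' hL0.ne']
        have hlogγL : Real.log γ⁻¹ = -Real.log γ := Real.log_inv γ
        have hBsW : B ≤ Real.sqrt W := by
          calc B = Real.sqrt (B^2) := by rw [Real.sqrt_sq hB0]
            _ ≤ Real.sqrt W := Real.sqrt_le_sqrt (le_trans hMB hWM)
        have hkey : γ * ((1 + Real.log γ⁻¹) + W + Real.log W) ≤ W :=
          key_numeric γ (Real.log γ⁻¹) W hγ0 hγ1 hlogγinv hW1 (by rw [← hBdef]; exact hBsW)
        have hexpand : γ * L / W * (1 + Real.log γ⁻¹ + W + Real.log W) ≤ L := by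
          rw [div_mul_eq_mul_div, div_le_iff₀ hW0]
          calc γ * L * (1 + Real.log γ⁻¹ + W + Real.log W)
              = L * (γ * ((1 + Real.log γ⁻¹) + W + Real.log W)) := by ring
            _ ≤ L * W := mul_le_mul_of_nonneg_left hkey hL0.le
        calc vb + Real.negMulLog vb
            = vb * (1 - Real.log vb) := by rw [Real.negMulLog]; ring
          _ = γ * L / W * (1 + Real.log γ⁻¹ + W + Real.log W) := by
              rw [hlogvb, hvbdef, hlogγL, hlogL]
              ring
          _ ≤ L := hexpand
      have hSigreal : (∑ i ∈ Finset.range d, (n.choose i : ℝ)) < (m:ℝ) := by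
        calc (∑ i ∈ Finset.range d, (n.choose i : ℝ))
            = ∑ i ∈ Finset.range (k+1), (n.choose i : ℝ) := by rw [hkd]
          _ ≤ Real.exp ((k:ℝ) + k * Real.log ((n:ℝ)/k)) := hsum
          _ = Real.exp ((n:ℝ) * (v + Real.negMulLog v)) := by rw [hexpid]
          _ < Real.exp ((n:ℝ) * L) := by
              apply Real.exp_lt_exp.2
              exact mul_lt_mul_of_pos_left (lt_of_lt_of_le hψ hψvb) hnpos
          _ = (m:ℝ) := by
              rw [mul_comm, hLn, Real.exp_log hm0]
      have := hSigreal
      rw [show (∑ i ∈ Finset.range d, (n.choose i : ℝ))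
          = ((∑ i ∈ Finset.range d, n.choose i : ℕ) : ℝ) from (Nat.cast_sum _ _).symm] at this
      exact_mod_cast this
  obtain ⟨R, hRcard, hRsel⟩ := exists_shattered A d (hmdef ▸ hSig)
  have hdn : d ≤ n := by
    rw [← hRcard]
    simpa using Finset.card_le_univ R
  have hsumd := shatter_sum_bound hn A R hRsel
  rw [hRcard] at hsumd
  have hΔ1 : avgDistP 1 A ≤ ((n:ℝ) - d)/2 := by
    rw [avgDistP_one]
    rw [show (∑ x : Fin n → Bool, (dlToSet (fun _ => true) x A : ℝ))
        = ((∑ x : Fin n → Bool, dlToSet (fun _ => true) x A : ℕ) : ℝ)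
        from (Nat.cast_sum _ _).symm]
    have h1 : ((∑ x : Fin n → Bool, dlToSet (fun _ => true) x A : ℕ) : ℝ)
        ≤ (((n - d) * 2^(n-1) : ℕ) : ℝ) := by exact_mod_cast hsumd
    have h2 : (((n - d) * 2^(n-1) : ℕ) : ℝ) = ((n:ℝ) - d) * 2^(n-1) := by
      push_cast [Nat.cast_sub hdn]
      ring
    have h3 : ((2:ℝ))^n = 2 * 2^(n-1) := by
      rw [← pow_succ']
      congr 1
      omega
    rw [div_le_iff₀ (by positivity), h3]
    calc ((∑ x : Fin n → Bool, dlToSet (fun _ => true) x A : ℕ) : ℝ)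
        ≤ ((n:ℝ) - d) * 2^(n-1) := h1.trans_eq h2
      _ = ((n:ℝ) - d)/2 * (2 * 2^(n-1)) := by ring
  have hρ₁ : (d:ℝ)/(2*n) ≤ 1/2 - avgDistP 1 A / n := by
    have h1 : avgDistP 1 A / n ≤ ((n:ℝ) - d)/(2*n) := by
      rw [div_le_div_iff₀ hnpos (mul_pos two_pos hnpos)]
      calc avgDistP 1 A * (2*n) = (avgDistP 1 A) * 2 * n := by ring
        _ ≤ (((n:ℝ) - d)/2) * 2 * n := by
            apply mul_le_mul_of_nonneg_right _ hnpos.le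
            exact mul_le_mul_of_nonneg_right hΔ1 (by norm_num)
        _ = ((n:ℝ) - d) * n := by ring
    have h2 : (1:ℝ)/2 - ((n:ℝ) - d)/(2*n) = (d:ℝ)/(2*n) := by
      field_simp
      ring
    linarith
  -- construct t₀
  set ε : ℝ := (L/(2*c₄))^2 with hεdef
  have hLc₄pos : 0 < L/(2*c₄) := div_pos hL0 (by linarith)
  have hε0 : 0 < ε := by rw [hεdef]; exact pow_pos hLc₄pos 2
  have hLc₄ : L / c₄ ≤ Real.exp (-1) / 2 := by
    have h1 : L ≤ Real.exp (-1) := hLδ.trans hexpM1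
    rw [div_le_div_iff₀ hc₄0 (by norm_num)]
    nlinarith only [h1, h₄, Real.exp_pos (-1:ℝ)]
  have hεe : ε ≤ Real.exp (-1) := by
    have h2 : L/(2*c₄) ≤ Real.exp (-1)/4 := by
      have : L/(2*c₄) = (L/c₄)/2 := by ring
      rw [this]; linarith
    have h3 : Real.exp (-1) ≤ 1 := hexp1lt.le
    rw [hεdef]
    nlinarith only [h2, h3, hLc₄pos, Real.exp_pos (-1:ℝ)]
  have hεneg : Real.negMulLog ε ≤ L / c₄ := by
    have h1 := negMulLog_le_two_sqrt hε0
    have h2 : Real.sqrt ε = L/(2*c₄) := by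
      rw [hεdef, Real.sqrt_sq hLc₄pos.le]
    rw [h2] at h1
    calc Real.negMulLog ε ≤ 2 * (L/(2*c₄)) := h1
      _ = L/c₄ := by ring
  have hnmle : Real.negMulLog (Real.exp (-1)) = Real.exp (-1) := by
    rw [Real.negMulLog, Real.log_exp]
    ring
  have hmem : L/c₄ ∈ Set.Icc (Real.negMulLog ε) (Real.negMulLog (Real.exp (-1))) := by
    rw [hnmle]
    exact ⟨hεneg, le_trans hLc₄ (by linarith [Real.exp_pos (-1:ℝ)])⟩
  obtain ⟨t₀, ht₀mem, ht₀⟩ :=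
    intermediate_value_Icc hεe Real.continuous_negMulLog.continuousOn hmem
  have ht₀0 : 0 < t₀ := lt_of_lt_of_le hε0 ht₀mem.1
  have ht₀e : t₀ ≤ Real.exp (-1) := ht₀mem.2
  have ht₀1 : t₀ ≤ 1 := ht₀e.trans hexp1lt.le
  -- t₀ ≤ ρ₁
  have ht₀ρ : t₀ ≤ 1/2 - avgDistP 1 A / n := by
    set s : ℝ := (d:ℝ)/(2*n) with hsdef
    have hs0 : 0 < s := div_pos hd0R (mul_pos two_pos hnpos)
    rcases lt_or_ge (Real.exp (-1)) s with hse | hse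
    · linarith
    · have hslow : γ*L/(2*W) ≤ s := by
        rw [hsdef, div_le_div_iff₀ (mul_pos two_pos hW0) (mul_pos two_pos hnpos)]
        calc γ*L*(2*n) = 2*(γ*L*n) := by ring
          _ = 2*(z*W) := by rw [hzW]
          _ ≤ 2*((d:ℝ)*W) := by
              nlinarith only [mul_nonneg (sub_nonneg.2 hdz) hW0.le]
          _ = (d:ℝ)*(2*W) := by ring
      have hd3 : (d:ℝ) ≤ 3*L*n := by
        have h1 : z ≤ γ*L*n := by
          nlinarith only [hzW, mul_nonneg hz0.le (sub_nonneg.2 hW1)]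
        have h2 : (1:ℝ) ≤ L*n/Real.log 2 := by
          rw [le_div_iff₀ hlog2pos]
          linarith only [hLnlog2]
        have h3 : L*n/Real.log 2 ≤ 2*(L*n) := by
          rw [div_le_iff₀ hlog2pos]
          nlinarith only [mul_pos hL0 hnpos, hlog2half]
        have h4 : γ*L*n ≤ L*n := by
          nlinarith only [mul_nonneg hγ1'.le (mul_pos hL0 hnpos).le]
        linarith
      have hlogs : θ*W ≤ -Real.log s := by
        have h1 : s ≤ 3*L/2 := by
          rw [hsdef, div_le_div_iff₀ (mul_pos two_pos hnpos) two_pos]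
          linarith only [hd3]
        have h2 : Real.log s ≤ Real.log (3*L/2) := Real.log_le_log hs0 h1
        have h3 : Real.log (3*L/2) = Real.log (3/2) + Real.log L := by
          rw [show (3:ℝ)*L/2 = (3/2)*L by ring, Real.log_mul (by norm_num) hL0.ne']
        have h4 : Real.log (3/2) ≤ 1/2 := by
          have := Real.log_le_sub_one_of_pos (show (0:ℝ) < 3/2 by norm_num)
          linarith
        have h5 : W - 1/2 ≤ -Real.log s := by
          rw [h3, hlogL] at h2
          linarith
        have h6 : (1:ℝ) ≤ (1-θ)*W := by
          have h7 : 1/(1-θ) ≤ W := le_trans hMθ hWM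
          rw [div_le_iff₀ hθ1'] at h7
          nlinarith only [h7]
        linarith
      have hprod : (γ*L/(2*W))*(θ*W) = L/c₄ := by
        have h1 : (γ*L/(2*W))*(θ*W) = (γ*θ)*L/2 := by
          field_simp
        rw [h1, hγθ]
        field_simp
      have hnmls : L/c₄ ≤ Real.negMulLog s := by
        have hrw : Real.negMulLog s = s * (-Real.log s) := by
          rw [Real.negMulLog]; ring
        rw [hrw, ← hprod]
        apply mul_le_mul hslow hlogs (mul_pos hθ0 hW0).le hs0.le
      have hts : t₀ ≤ s := by
        by_contra hst
        push_neg at hst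
        have := strictMonoOn_negMulLog' ⟨hs0.le, hse⟩ ⟨ht₀0.le, ht₀e⟩ hst
        rw [ht₀] at this
        linarith
      linarith
  -- IVT for ρ(p)
  have hfc : ContinuousOn (fun p => p/2 - avgDistP p A / n) (Set.Icc t₀ 1) := by
    apply Continuous.continuousOn
    have h := continuous_avgDistP A
    fun_prop
  have hft₀ : t₀/2 - avgDistP t₀ A / n ≤ t₀ := by
    have h1 : 0 ≤ avgDistP t₀ A := avgDistP_nonneg A ht₀0.le ht₀1
    have h2 : 0 ≤ avgDistP t₀ A / n := div_nonneg h1 hnpos.le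
    linarith
  have hf1 : t₀ ≤ (1:ℝ)/2 - avgDistP 1 A / n := ht₀ρ
  obtain ⟨p, hpmem, hfp⟩ :=
    intermediate_value_Icc ht₀1 hfc ⟨hft₀, hf1⟩
  refine ⟨p, lt_of_lt_of_le ht₀0 hpmem.1, hpmem.2, fun ρ hρ => ?_⟩
  have hρt : ρ = t₀ := by rw [hρ, ← hfp]
  subst hρt
  have hlog1ρ : Real.log (1/ρ) = -Real.log ρ := by
    rw [one_div, Real.log_inv]
  have hLeq : ρ * Real.log (1/ρ) = L/c₄ := by
    rw [hlog1ρ, ← ht₀, Real.negMulLog]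
    ring
  have hlogρ0 : 0 ≤ Real.log (1/ρ) := by
    rw [hlog1ρ]
    have : Real.log ρ < 0 := Real.log_neg ht₀0 (lt_of_le_of_lt ht₀e hexp1lt)
    linarith
  constructor
  · rcases le_or_gt c₃ 0 with hc₃ | hc₃
    · have h1 : 0 ≤ ρ^2 * Real.log (1/ρ) := mul_nonneg (sq_nonneg ρ) hlogρ0
      have h2 : c₃ * ρ^2 * Real.log (1/ρ) ≤ 0 := by
        nlinarith only [mul_nonneg (neg_nonneg.2 hc₃) h1]
      linarith
    · have h1 : c₃ * ρ^2 * Real.log (1/ρ) = c₃ * ρ * (ρ * Real.log (1/ρ)) := by ring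
      rw [h1, hLeq]
      have hc₃2 : c₃ < 2 := by
        have : 1/Real.log 2 ≤ 2 := by
          rw [div_le_iff₀ hlog2pos]; linarith
        linarith
      have h2 : c₃ * ρ ≤ c₄ := by
        nlinarith only [mul_nonneg hc₃.le (sub_nonneg.2 ht₀1), hc₃2, h₄]
      have h3 : c₃ * ρ * (L/c₄) ≤ c₄ * (L/c₄) :=
        mul_le_mul_of_nonneg_right h2 (div_pos hL0 hc₄0).le
      have h4 : c₄ * (L/c₄) = L := by field_simp
      linarith
  · have h1 : c₄ * ρ * Real.log (1/ρ) = c₄ * (ρ * Real.log (1/ρ)) := by ring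
    rw [h1, hLeq]
    have h2 : c₄ * (L/c₄) = L := by field_simp
    linarith
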